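/- Let d ≥ 1 be an integer, let G be a graph on vertex set [n] with n > d, fix a generic embedding 𝐩 : [n] → ℝ^d, and let A ⊆ [n]. If A induces a clique in the d-rigidity closure C_d(G), then every pair in C_{d,A}(G) is an edge of C_d(G), i.e., C_{d,A}(G) ⊆ C_d(G). -/

import Mathlib

/-- An embedding is generic if its `d·n` coordinates are algebraically independent over `ℚ`. -/
def IsGeneric {n d : ℕ} (pt : Fin n → Fin d → ℝ) : Prop :=
  AlgebraicIndependent ℚ fun vi : Fin n × Fin d => pt vi.1 vi.2

/-- The rigidity-matrix row of a pair `e`, as a vector of `ℝ^{dn}` (with the Euclidean inner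
product). -/
noncomputable def rRow {n d : ℕ} (pt : Fin n → Fin d → ℝ) (e : Sym2 (Fin n)) :
    EuclideanSpace ℝ (Fin n × Fin d) :=
  WithLp.toLp 2 fun vi => if h : vi.1 ∈ e then pt vi.1 vi.2 - pt (Sym2.Mem.other h) vi.2 else 0

/-- `V_A`: the span of the rows of the pairs inside `A`. -/
noncomputable def VA (n d : ℕ) (pt : Fin n → Fin d → ℝ) (A : Set (Fin n)) :
    Submodule ℝ (EuclideanSpace ℝ (Fin n × Fin d)) :=
  Submodule.span ℝ (rRow pt '' {e : Sym2 (Fin n) | ¬ e.IsDiag ∧ ∀ v ∈ e, v ∈ A})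

/-- `P_{W_A} r_e`: the orthogonal projection of the row `r_e` onto `W_A = V_A^⊥`. -/
noncomputable def projRow (n d : ℕ) (pt : Fin n → Fin d → ℝ) (A : Set (Fin n))
    (e : Sym2 (Fin n)) : ↥((VA n d pt A)ᗮ) :=
  Submodule.orthogonalProjectionOnto (VA n d pt A)ᗮ (rRow pt e)

/-- `C_{d,A}(G)`: the pairs `f ∉ (A choose 2)` with `P_{W_A} r_f` in the span of the projected
rows of the edges of `G`. -/
def projClosure (n d : ℕ) (pt : Fin n → Fin d → ℝ) (A : Set (Fin n))
    (G : SimpleGraph (Fin n)) : Set (Sym2 (Fin n)) :=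
  {f | ¬ f.IsDiag ∧ ¬ (∀ v ∈ f, v ∈ A) ∧
    projRow n d pt A f ∈ Submodule.span ℝ (projRow n d pt A '' G.edgeSet)}

/-- The `d`-rigidity closure `C_d(G)` with respect to an embedding `pt`. -/
noncomputable def rigidityClosure (n d : ℕ) (pt : Fin n → Fin d → ℝ)
    (G : SimpleGraph (Fin n)) : SimpleGraph (Fin n) where
  Adj x y := x ≠ y ∧ rRow pt s(x, y) ∈ Submodule.span ℝ (rRow pt '' G.edgeSet)
  symm := ⟨fun x y h => ⟨h.1.symm, by rw [Sym2.eq_swap]; exact h.2⟩⟩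
  loopless := ⟨fun x h => h.1 rfl⟩

/-- Fix a generic embedding. If `A` induces a clique in the `d`-rigidity
closure `C_d(G)`, then `C_{d,A}(G) ⊆ C_d(G)`. -/
theorem stmt_8 (d n : ℕ) (hd : 1 ≤ d) (hn : d < n) (G : SimpleGraph (Fin n))
    (pt : Fin n → Fin d → ℝ) (hpt : IsGeneric pt) (A : Set (Fin n))
    (hA : (rigidityClosure n d pt G).IsClique A) :
    projClosure n d pt A G ⊆ (rigidityClosure n d pt G).edgeSet := by
  intro f hf
  obtain ⟨hdiag, -, hmem⟩ := hf
  set S := Submodule.span ℝ (rRow pt '' G.edgeSet) with hS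
  -- VA ≤ S
  have hVS : VA n d pt A ≤ S := by
    rw [VA, Submodule.span_le]
    rintro - ⟨e, ⟨he1, he2⟩, rfl⟩
    induction e using Sym2.ind with
    | _ x y =>
      have hxy : x ≠ y := by simpa [Sym2.mk_isDiag_iff] using he1
      exact (hA (he2 x (Sym2.mem_mk_left x y)) (he2 y (Sym2.mem_mk_right x y)) hxy).2
  -- projRow is the orthogonal projection of rRow
  have himg : projRow n d pt A '' G.edgeSet
      = (Submodule.orthogonalProjectionOnto (VA n d pt A)ᗮ).toLinearMap '' (rRow pt '' G.edgeSet) := by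
    rw [Set.image_image]; rfl
  rw [himg, ← Submodule.map_span] at hmem
  obtain ⟨s, hsS, hs⟩ := hmem
  have hker : rRow pt f - s ∈ VA n d pt A := by
    have h0 : Submodule.orthogonalProjectionOnto (VA n d pt A)ᗮ (rRow pt f - s) = 0 := by
      rw [map_sub]
      have : projRow n d pt A f = Submodule.orthogonalProjectionOnto (VA n d pt A)ᗮ (rRow pt f) := rfl
      rw [← this, ← hs]; exact sub_self _
    have := Submodule.orthogonalProjectionOnto_eq_zero_iff.mp h0
    rwa [Submodule.orthogonal_orthogonal] at this
  have hfS : rRow pt f ∈ S := by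
    have := S.add_mem (hVS hker) hsS
    simpa using this
  induction f using Sym2.ind with
  | _ x y =>
    have hxy : x ≠ y := by simpa [Sym2.mk_isDiag_iff] using hdiag
    exact ⟨hxy, hfS⟩
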